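/- Let G ↪ X be a continuous action of a countable group on a compact metrizable space. Suppose that for every continuous action H ↪ Y of a countable group on a compact metrizable space, the product action G × H ↪ X × Y has the small boundary property. Then G ↪ X has the small boundary property and no finite orbits. -/

import Mathlib

open MeasureTheory Topology

open scoped ENNReal

/-- A measure is invariant for the action of `G`. -/
def IsInvariantMeasure (G : Type*) {X : Type*} [Group G] [MulAction G X]
    [MeasurableSpace X] (μ : Measure X) : Prop :=
  ∀ g : G, Measure.map (fun x : X => g • x) μ = μ

/-- The small boundary property for the action of `G` on `X`: there is a basis of open
sets whose boundaries are null for every `G`-invariant Borel probability measure. -/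
def ActionSBP (G X : Type*) [Group G] [MulAction G X] [TopologicalSpace X]
    [MeasurableSpace X] : Prop :=
  ∃ B : Set (Set X), TopologicalSpace.IsTopologicalBasis B ∧
    ∀ U ∈ B, ∀ μ : ProbabilityMeasure X, IsInvariantMeasure G (μ : Measure X) →
      (μ : Measure X) (frontier U) = 0

/-- The small boundary property for the product action of `G × H` on `X × Y`. -/
def ProdActionSBP (G H X Y : Type*) [Group G] [Group H] [MulAction G X] [MulAction H Y]
    [TopologicalSpace X] [TopologicalSpace Y] [MeasurableSpace X] [MeasurableSpace Y] : Prop :=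
  ∃ B : Set (Set (X × Y)), TopologicalSpace.IsTopologicalBasis B ∧
    ∀ U ∈ B, ∀ μ : ProbabilityMeasure (X × Y),
      (∀ (g : G) (h : H),
        Measure.map (fun p : X × Y => (g • p.1, h • p.2)) (μ : Measure (X × Y)) =
          (μ : Measure (X × Y))) →
      (μ : Measure (X × Y)) (frontier U) = 0

universe v w

private lemma map_finset_sum' {ι α β : Type*} [MeasurableSpace α] [MeasurableSpace β]
    (s : Finset ι) (μ : ι → Measure α) {f : α → β} (hf : Measurable f) :
    Measure.map f (∑ i ∈ s, μ i) = ∑ i ∈ s, Measure.map f (μ i) := by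
  classical
  induction s using Finset.induction with
  | empty => simp
  | insert a s h ih => simp [Finset.sum_insert h, Measure.map_add _ _ hf, ih]

private instance : ContinuousConstSMul PUnit.{w+1} (ULift.{v} unitInterval) :=
  ⟨fun _ => continuous_id⟩

private instance : PreconnectedSpace (ULift.{v} unitInterval) := by
  haveI : ConnectedSpace (ULift.{v} unitInterval) :=
    Equiv.ulift.symm.surjective.connectedSpace continuous_uliftUp
  infer_instance

/-- Auxiliary: the SBP for the product with a trivial action implies the SBP. -/
private lemma sbp_aux {G X : Type*} [Group G] [TopologicalSpace X]
    [SecondCountableTopology X] [MeasurableSpace X] [BorelSpace X]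
    [MulAction G X] [ContinuousConstSMul G X]
    (hsbp : ProdActionSBP G PUnit.{w+1} X PUnit.{v+1}) : ActionSBP G X := by
  obtain ⟨B, hB, hBnull⟩ := hsbp
  set f : X → X × PUnit.{v+1} := fun x => (x, PUnit.unit) with hfdef
  have hf : Continuous f := continuous_id.prodMk continuous_const
  have hfm : Measurable f := hf.measurable
  refine ⟨(fun U => f ⁻¹' U) '' B, ?_, ?_⟩
  · refine TopologicalSpace.isTopologicalBasis_of_isOpen_of_nhds ?_ ?_
    · rintro _ ⟨U, hU, rfl⟩
      exact (hB.isOpen hU).preimage hf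
    · intro a u hau hu
      have hmem : f a ∈ u ×ˢ (Set.univ : Set PUnit.{v+1}) := ⟨hau, trivial⟩
      obtain ⟨vv, hvB, hav, hvsub⟩ :=
        hB.exists_subset_of_mem_open hmem (hu.prod isOpen_univ)
      exact ⟨f ⁻¹' vv, ⟨vv, hvB, rfl⟩, hav, fun x hx => (hvsub hx).1⟩
  · rintro _ ⟨U, hU, rfl⟩ μ hμ
    set ν : ProbabilityMeasure (X × PUnit.{v+1}) :=
      ⟨(μ : Measure X).map f, Measure.isProbabilityMeasure_map hfm.aemeasurable⟩ with hνdef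
    have hinv : ∀ (g : G) (h : PUnit.{w+1}),
        Measure.map (fun p : X × PUnit.{v+1} => (g • p.1, h • p.2))
            (ν : Measure (X × PUnit.{v+1})) =
          (ν : Measure (X × PUnit.{v+1})) := by
      intro g h
      have hFc : Continuous fun p : X × PUnit.{v+1} => (g • p.1, h • p.2) :=
        ((continuous_const_smul g).comp continuous_fst).prodMk
          ((continuous_const_smul h).comp continuous_snd)
      have hgc : Measurable fun x : X => g • x := (continuous_const_smul g).measurable
      show Measure.map _ ((μ : Measure X).map f) = (μ : Measure X).map f
      rw [Measure.map_map hFc.measurable hfm]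
      have hcomp : (fun p : X × PUnit.{v+1} => (g • p.1, h • p.2)) ∘ f
          = f ∘ (fun x : X => g • x) := rfl
      rw [hcomp, ← Measure.map_map hfm hgc, hμ g]
    have h0 : (ν : Measure (X × PUnit.{v+1})) (frontier U) = 0 := hBnull U hU ν hinv
    have h1 : (μ : Measure X) (frontier (f ⁻¹' U)) ≤ (μ : Measure X) (f ⁻¹' frontier U) :=
      measure_mono (hf.frontier_preimage_subset U)
    have h2 : (μ : Measure X) (f ⁻¹' frontier U)
        = ((μ : Measure X).map f) (frontier U) :=
      (Measure.map_apply hfm isClosed_frontier.measurableSet).symm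
    exact le_antisymm (h1.trans_eq (h2.trans h0)) (zero_le)

/-- Auxiliary: the SBP for the product with the trivial action on `[0,1]` rules out
finite orbits. -/
private lemma no_finite_orbit_aux {G X : Type*} [Group G] [TopologicalSpace X]
    [T2Space X] [SecondCountableTopology X] [MeasurableSpace X] [BorelSpace X]
    [MulAction G X] [ContinuousConstSMul G X]
    (hsbp : ProdActionSBP G PUnit.{w+1} X (ULift.{v} unitInterval))
    (x0 : X) (hO : (MulAction.orbit G x0).Finite) : False := by
  classical
  obtain ⟨B, hB, hBnull⟩ := hsbp
  set s : Finset X := hO.toFinset with hsdef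
  have hx0 : x0 ∈ s := hO.mem_toFinset.mpr (MulAction.mem_orbit_self x0)
  have hsmem : ∀ (g : G), ∀ o ∈ s, g • o ∈ s := by
    intro g o ho
    rw [hO.mem_toFinset] at ho ⊢
    obtain ⟨g', rfl⟩ := ho
    exact ⟨g * g', mul_smul g g' x0⟩
  set n : ℕ := s.card with hndef
  have hn : 0 < n := Finset.card_pos.mpr ⟨x0, hx0⟩
  have hn0 : (n : ℝ≥0∞) ≠ 0 := by exact_mod_cast hn.ne'
  have hntop : (n : ℝ≥0∞) ≠ ⊤ := ENNReal.natCast_ne_top n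
  -- the invariant atomic measures
  set μt : (ULift.{v} unitInterval) → Measure (X × (ULift.{v} unitInterval)) :=
    fun t => ((n : ℝ≥0∞)⁻¹ • ∑ o ∈ s, Measure.dirac (o, t)) with hμtdef
  have hμtprob : ∀ t, IsProbabilityMeasure (μt t) := by
    intro t
    constructor
    rw [hμtdef]
    simp only [Measure.smul_apply, Measure.coe_finset_sum, Finset.sum_apply,
      measure_univ, Finset.sum_const, nsmul_eq_mul, mul_one, smul_eq_mul]
    exact ENNReal.inv_mul_cancel hn0 hntop
  have hμtinv : ∀ t, ∀ (g : G) (h : PUnit.{w+1}),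
      Measure.map (fun p : X × (ULift.{v} unitInterval) => (g • p.1, h • p.2)) (μt t) = μt t := by
    intro t g h
    have hFc : Continuous fun p : X × (ULift.{v} unitInterval) => (g • p.1, h • p.2) :=
      ((continuous_const_smul g).comp continuous_fst).prodMk
        ((continuous_const_smul h).comp continuous_snd)
    rw [hμtdef]
    rw [Measure.map_smul, map_finset_sum' s _ hFc.measurable]
    congr 1
    have hd : ∀ o : X, Measure.map (fun p : X × (ULift.{v} unitInterval) => (g • p.1, h • p.2))
        (Measure.dirac (o, t)) = Measure.dirac ((g • o, t) : X × (ULift.{v} unitInterval)) := by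
      intro o
      rw [Measure.map_dirac' hFc.measurable]
      rfl
    simp_rw [hd]
    refine Finset.sum_nbij' (fun o => g • o) (fun o => g⁻¹ • o)
      (fun o ho => hsmem g o ho) (fun o ho => hsmem g⁻¹ o ho)
      (fun o _ => inv_smul_smul g o) (fun o _ => smul_inv_smul g o)
      (fun o _ => rfl)
  -- every slice of a basis element at x0 is clopen
  have hslice : ∀ U ∈ B, IsClopen ((fun y : (ULift.{v} unitInterval) => (x0, y)) ⁻¹' U) := by
    intro U hU
    have hc : Continuous fun y : (ULift.{v} unitInterval) => (x0, y) :=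
      continuous_const.prodMk continuous_id
    have hSopen : IsOpen ((fun y : (ULift.{v} unitInterval) => (x0, y)) ⁻¹' U) :=
      (hB.isOpen hU).preimage hc
    have hfr : frontier ((fun y : (ULift.{v} unitInterval) => (x0, y)) ⁻¹' U) = ∅ := by
      rw [Set.eq_empty_iff_forall_notMem]
      intro t ht
      have hmem : ((x0, t) : X × (ULift.{v} unitInterval)) ∈ frontier U := hc.frontier_preimage_subset U ht
      have h0 : (μt t) (frontier U) = 0 := hBnull U hU ⟨μt t, hμtprob t⟩ (hμtinv t)
      have hle : (μt t) {((x0, t) : X × (ULift.{v} unitInterval))} ≤ (μt t) (frontier U) :=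
        measure_mono (Set.singleton_subset_iff.mpr hmem)
      have hlb : (n : ℝ≥0∞)⁻¹ ≤ (μt t) {((x0, t) : X × (ULift.{v} unitInterval))} := by
        rw [hμtdef]
        simp only [Measure.smul_apply, Measure.coe_finset_sum, Finset.sum_apply,
          smul_eq_mul]
        have h1 : (1 : ℝ≥0∞) ≤ ∑ o ∈ s, Measure.dirac ((o, t) : X × (ULift.{v} unitInterval))
            {((x0, t) : X × (ULift.{v} unitInterval))} := by
          have hsum := Finset.single_le_sum
            (f := fun o : X => Measure.dirac ((o, t) : X × (ULift.{v} unitInterval)) {((x0, t) : X × (ULift.{v} unitInterval))})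
            (fun o _ => zero_le) hx0
          refine le_trans ?_ hsum
          simp [Measure.dirac_apply]
        calc (n : ℝ≥0∞)⁻¹ = (n : ℝ≥0∞)⁻¹ * 1 := (mul_one _).symm
          _ ≤ _ := mul_le_mul_right h1 _
      have hz : (n : ℝ≥0∞)⁻¹ = 0 :=
        le_antisymm (hlb.trans (hle.trans_eq h0)) (zero_le)
      exact (ENNReal.inv_ne_zero.mpr hntop) hz
    refine ⟨?_, hSopen⟩
    have hcl : closure ((fun y : (ULift.{v} unitInterval) => (x0, y)) ⁻¹' U)
        ⊆ (fun y : (ULift.{v} unitInterval) => (x0, y)) ⁻¹' U := by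
      intro y hy
      by_contra hns
      rw [hSopen.frontier_eq] at hfr
      exact Set.eq_empty_iff_forall_notMem.mp hfr y ⟨hy, hns⟩
    exact isClosed_of_closure_subset hcl
  -- contradiction with the connectedness of [0,1]
  set V : Set (ULift.{v} unitInterval) := (fun y : (ULift.{v} unitInterval) => (y.down : ℝ)) ⁻¹' Set.Iio (1 / 2 : ℝ) with hVdef
  have hVopen : IsOpen V :=
    isOpen_Iio.preimage (continuous_subtype_val.comp continuous_uliftDown)
  have h0V : (ULift.up (0 : unitInterval) : (ULift.{v} unitInterval)) ∈ V := by
    simp only [hVdef, Set.mem_preimage, Set.mem_Iio]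
    norm_num
  have hmem : ((x0, ULift.up (0 : unitInterval)) : X × (ULift.{v} unitInterval))
      ∈ (Set.univ : Set X) ×ˢ V := ⟨trivial, h0V⟩
  obtain ⟨U, hUB, hmemU, hsub⟩ :=
    hB.exists_subset_of_mem_open hmem (isOpen_univ.prod hVopen)
  have hSV : (fun y : (ULift.{v} unitInterval) => (x0, y)) ⁻¹' U ⊆ V := fun y hy => (hsub hy).2
  have hSuniv : (fun y : (ULift.{v} unitInterval) => (x0, y)) ⁻¹' U = Set.univ :=
    (hslice U hUB).eq_univ ⟨ULift.up (0 : unitInterval), hmemU⟩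
  have h1V : (ULift.up (1 : unitInterval) : (ULift.{v} unitInterval)) ∈ V := hSV (hSuniv ▸ Set.mem_univ _)
  rw [hVdef] at h1V
  simp only [Set.mem_preimage, Set.mem_Iio] at h1V
  norm_num at h1V

theorem product_sbp_implies_sbp_no_finite_orbits {G X : Type*} [Group G] [Countable G]
    [TopologicalSpace X] [CompactSpace X] [TopologicalSpace.MetrizableSpace X]
    [MeasurableSpace X] [BorelSpace X] [MulAction G X] [ContinuousConstSMul G X]
    (hprod : ∀ (H Y : Type*) [Group H] [Countable H]
      [TopologicalSpace Y] [CompactSpace Y] [TopologicalSpace.MetrizableSpace Y]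
      [MeasurableSpace Y] [BorelSpace Y] [MulAction H Y] [ContinuousConstSMul H Y],
      ProdActionSBP G H X Y) :
    ActionSBP G X ∧ ∀ x : X, (MulAction.orbit G x).Infinite := by
  haveI : SecondCountableTopology X := by
    letI := TopologicalSpace.metrizableSpaceMetric X; infer_instance
  haveI : T2Space X := by
    letI := TopologicalSpace.metrizableSpaceMetric X; infer_instance
  refine ⟨sbp_aux (hprod PUnit PUnit), fun x0 => ?_⟩
  by_contra hfin
  rw [Set.not_infinite] at hfin
  exact no_finite_orbit_aux (hprod PUnit (ULift unitInterval)) x0 hfin
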